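/- Let C : ℤ → U(2) satisfy the standing Assumption, let U = S∘C (a unitary operator on ℋ = ℓ²(ℤ;ℂ²)), and let J be a bounded interval with J ⊇ chs(C−I₂). Then for every λ ∈ ℂ with |λ| > 1 and every ψ ∈ ℋ: (1_J U 1_J − λ)(1_J (U−λ)^{−1} 1_J ψ) = λ(λ−1)·0 + 1_J ψ, i.e. (1_J U 1_J)(1_J (U−λ)^{−1} 1_J ψ) − λ·(1_J (U−λ)^{−1} 1_J ψ) = 1_J ψ. Consequently, the cut-off resolvent 1_J (U−λ)^{−1} 1_J, restricted to the finite-dimensional subspace of elements of ℋ supported in J, is a two-sided inverse of the restriction of 1_J U 1_J − λ to that subspace. -/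

import Mathlib

noncomputable section

open scoped ComplexConjugate

/-- A state: a map ℤ → ℂ², components `ψ x 0` (left, ψ^L) and `ψ x 1` (right, ψ^R). -/
abbrev QWState := ℤ → Fin 2 → ℂ

/-- The quantum walk operator U = S∘C acting pointwise:
`(Uψ)(x) = ((C(x+1)ψ(x+1))₁, (C(x−1)ψ(x−1))₂)`. -/
def qwalk (C : ℤ → Matrix (Fin 2) (Fin 2) ℂ) (ψ : QWState) : QWState :=
  fun x => ![(C (x + 1)).mulVec (ψ (x + 1)) 0, (C (x - 1)).mulVec (ψ (x - 1)) 1]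

/-- The standing Assumption on the coin. -/
structure CoinAssumption (C : ℤ → Matrix (Fin 2) (Fin 2) ℂ) : Prop where
  unitary : ∀ x, C x ∈ Matrix.unitaryGroup (Fin 2) ℂ
  d11 : ∀ x, C x 0 0 ≠ 0
  d22 : ∀ x, C x 1 1 ≠ 0
  fin : Set.Finite {x : ℤ | C x ≠ 1}

/-- Outgoing: ψ^L vanishes far right, ψ^R vanishes far left. -/
def Outgoing (ψ : QWState) : Prop :=
  ∃ r : ℤ, 0 < r ∧ ∀ x : ℤ, r < x → ψ x 0 = 0 ∧ ψ (-x) 1 = 0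

/-- Indicator (as a complex factor) of the integer interval [a,b]. -/
def jind (a b x : ℤ) : ℂ := if a ≤ x ∧ x ≤ b then 1 else 0

/-- The convex hull chs(C−I₂) of the support of C−I₂, as a subset of ℤ. -/
def chsSet (C : ℤ → Matrix (Fin 2) (Fin 2) ℂ) : Set ℤ :=
  {x | ∃ y z : ℤ, C y ≠ 1 ∧ C z ≠ 1 ∧ y ≤ x ∧ x ≤ z}

/-- The Hilbert space ℋ = ℓ²(ℤ; ℂ²). -/
abbrev H2 := lp (fun _ : ℤ => EuclideanSpace ℂ (Fin 2)) 2

/-- Pointwise value of an element of ℋ. -/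
def ev (ψ : H2) (x : ℤ) (i : Fin 2) : ℂ := (ψ : ∀ _ : ℤ, EuclideanSpace ℂ (Fin 2)) x i

lemma mulVec2 (M : Matrix (Fin 2) (Fin 2) ℂ) (v : Fin 2 → ℂ) (i : Fin 2) :
    M.mulVec v i = M i 0 * v 0 + M i 1 * v 1 := by
  simp [Matrix.mulVec, dotProduct, Fin.sum_univ_two]

lemma coin_normSq {M : Matrix (Fin 2) (Fin 2) ℂ} (hM : M ∈ Matrix.unitaryGroup (Fin 2) ℂ)
    (v : Fin 2 → ℂ) :
    Complex.normSq (M.mulVec v 0) + Complex.normSq (M.mulVec v 1)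
      = Complex.normSq (v 0) + Complex.normSq (v 1) := by
  have h := (Matrix.mem_unitaryGroup_iff').mp hM
  have e := fun (j k : Fin 2) => congrFun (congrFun h j) k
  simp only [Matrix.mul_apply, Fin.sum_univ_two, Matrix.star_apply, Matrix.one_apply,
    RCLike.star_def] at e
  have e00 := e 0 0; have e01 := e 0 1; have e10 := e 1 0; have e11 := e 1 1
  norm_num at e00 e01 e10 e11
  have key : ∀ z : ℂ, (Complex.normSq z : ℂ) = z * conj z := fun z => (Complex.mul_conj z).symm
  have : ((Complex.normSq (M.mulVec v 0) + Complex.normSq (M.mulVec v 1) : ℝ) : ℂ)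
      = ((Complex.normSq (v 0) + Complex.normSq (v 1) : ℝ) : ℂ) := by
    push_cast
    rw [key, key, key, key]
    simp only [mulVec2, map_add, map_mul]
    linear_combination (v 0 * conj (v 0)) * e00 + (v 0 * conj (v 1)) * e10
      + (v 1 * conj (v 0)) * e01 + (v 1 * conj (v 1)) * e11
  exact_mod_cast this

lemma geom_zero (f : ℤ → ℂ) (lam : ℂ) (hlam : 1 < ‖lam‖) (M : ℝ)
    (hM : ∀ x, ‖f x‖ ≤ M) (c : ℤ) (hrec : ∀ x, c ≤ x → f (x + 1) = lam * f x) :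
    ∀ x, c ≤ x → f x = 0 := by
  intro x hx
  by_contra hne
  have key : ∀ n : ℕ, f (x + n) = lam ^ n * f x := by
    intro n
    induction n with
    | zero => simp
    | succ n ih =>
        have h1 : (x + (n+1 : ℕ) : ℤ) = (x + n) + 1 := by push_cast; ring
        rw [h1, hrec (x + n) (by omega), ih]
        ring
  have hfx : 0 < ‖f x‖ := norm_pos_iff.mpr hne
  obtain ⟨n, hn⟩ := pow_unbounded_of_one_lt (M / ‖f x‖) hlam
  have hb := hM (x + n)
  rw [key n, norm_mul, norm_pow] at hb
  have : M < ‖lam‖ ^ n * ‖f x‖ := by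
    rw [div_lt_iff₀ hfx] at hn; linarith
  linarith

lemma geom_zero' (f : ℤ → ℂ) (lam : ℂ) (hlam : 1 < ‖lam‖) (M : ℝ)
    (hM : ∀ x, ‖f x‖ ≤ M) (c : ℤ) (hrec : ∀ x, x ≤ c → f (x - 1) = lam * f x) :
    ∀ x, x ≤ c → f x = 0 := by
  have h := geom_zero (fun y => f (2 * c - y)) lam hlam M (fun y => hM _) c
    (fun y hy => by
      show f (2 * c - (y+1)) = lam * f (2 * c - y)
      have h2 : 2 * c - (y + 1) = (2 * c - y) - 1 := by ring
      rw [h2]; exact hrec (2 * c - y) (by omega))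
  intro x hx
  have := h (2 * c - x) (by omega)
  simpa using this

lemma ev_bound (η : H2) (x : ℤ) (i : Fin 2) : ‖ev η x i‖ ≤ ‖η‖ := by
  have h1 : ‖ev η x i‖ ≤ ‖(η : ∀ _ : ℤ, EuclideanSpace ℂ (Fin 2)) x‖ := by
    rw [EuclideanSpace.norm_eq]
    have : ‖ev η x i‖ = Real.sqrt (‖ev η x i‖ ^ 2) := (Real.sqrt_sq (norm_nonneg _)).symm
    rw [this]
    apply Real.sqrt_le_sqrt
    refine Finset.single_le_sum (f := fun j => ‖(η : ∀ _ : ℤ, EuclideanSpace ℂ (Fin 2)) x j‖ ^ 2)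
      (fun j _ => by positivity) (Finset.mem_univ i)
  exact le_trans h1 (lp.norm_apply_le_norm (by norm_num) η x)

lemma qwalk_zero_of (C : ℤ → Matrix (Fin 2) (Fin 2) ℂ) (φ : ℤ → Fin 2 → ℂ) (y : ℤ)
    (h : ∀ i, φ y i = 0) (i : Fin 2) : (C y).mulVec (φ y) i = 0 := by
  rw [mulVec2, h 0, h 1]; ring

lemma eig_zero (C : ℤ → Matrix (Fin 2) (Fin 2) ℂ)
    (hCu : ∀ x, C x ∈ Matrix.unitaryGroup (Fin 2) ℂ) (a b : ℤ) (lam : ℂ) (hlam : 1 < ‖lam‖)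
    (φ : ℤ → Fin 2 → ℂ) (hsupp : ∀ x, ¬ (a ≤ x ∧ x ≤ b) → ∀ i, φ x i = 0)
    (heig : ∀ x : ℤ, ∀ i : Fin 2, jind a b x * qwalk C φ x i = lam * φ x i) :
    ∀ x : ℤ, ∀ i : Fin 2, φ x i = 0 := by
  set N : ℝ := ∑ x ∈ Finset.Icc a b, (Complex.normSq (φ x 0) + Complex.normSq (φ x 1)) with hN
  -- sum over the enlarged interval of |qwalk|² equals N
  have hq0 : ∑ x ∈ Finset.Icc (a-1) (b+1), Complex.normSq (qwalk C φ x 0)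
      = ∑ y ∈ Finset.Icc a b, Complex.normSq ((C y).mulVec (φ y) 0) := by
    have h1 : ∑ x ∈ Finset.Icc (a-1) (b+1), Complex.normSq (qwalk C φ x 0)
        = ∑ y ∈ Finset.Icc a (b+2), Complex.normSq ((C y).mulVec (φ y) 0) := by
      rw [show Finset.Icc a (b+2) = (Finset.Icc (a-1) (b+1)).map (addRightEmbedding 1) by
        rw [Finset.map_add_right_Icc]; congr 1 <;> ring]
      rw [Finset.sum_map]
      refine Finset.sum_congr rfl (fun x _ => ?_)
      simp [qwalk, addRightEmbedding]
    rw [h1]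
    refine (Finset.sum_subset (Finset.Icc_subset_Icc le_rfl (by omega)) ?_).symm
    intro y hy hyn
    simp only [Finset.mem_Icc] at hy hyn
    rw [qwalk_zero_of C φ y (hsupp y (by omega))]
    simp
  have hq1 : ∑ x ∈ Finset.Icc (a-1) (b+1), Complex.normSq (qwalk C φ x 1)
      = ∑ y ∈ Finset.Icc a b, Complex.normSq ((C y).mulVec (φ y) 1) := by
    have h1 : ∑ x ∈ Finset.Icc (a-1) (b+1), Complex.normSq (qwalk C φ x 1)
        = ∑ y ∈ Finset.Icc (a-2) b, Complex.normSq ((C y).mulVec (φ y) 1) := by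
      rw [show Finset.Icc (a-2) b = (Finset.Icc (a-1) (b+1)).map (addRightEmbedding (-1)) by
        rw [Finset.map_add_right_Icc]; congr 1 <;> ring]
      rw [Finset.sum_map]
      refine Finset.sum_congr rfl (fun x _ => ?_)
      have : x + (-1) = x - 1 := by ring
      simp [qwalk, addRightEmbedding, this]
    rw [h1]
    refine (Finset.sum_subset (Finset.Icc_subset_Icc (by omega) le_rfl) ?_).symm
    intro y hy hyn
    simp only [Finset.mem_Icc] at hy hyn
    rw [qwalk_zero_of C φ y (hsupp y (by omega))]
    simp
  have hSN : ∑ x ∈ Finset.Icc (a-1) (b+1),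
      (Complex.normSq (qwalk C φ x 0) + Complex.normSq (qwalk C φ x 1)) = N := by
    rw [Finset.sum_add_distrib, hq0, hq1, ← Finset.sum_add_distrib, hN]
    exact Finset.sum_congr rfl (fun y _ => coin_normSq (hCu y) (φ y))
  -- |lam|² N ≤ N
  have hlamSq : 1 < Complex.normSq lam := by
    rw [Complex.normSq_eq_norm_sq]
    nlinarith
  have hineq : Complex.normSq lam * N ≤ N := by
    have h2 : Complex.normSq lam * N
        = ∑ x ∈ Finset.Icc a b, (Complex.normSq (lam * φ x 0) + Complex.normSq (lam * φ x 1)) := by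
      rw [hN, Finset.mul_sum]
      exact Finset.sum_congr rfl (fun x _ => by rw [Complex.normSq_mul, Complex.normSq_mul]; ring)
    have h3 : ∀ x ∈ Finset.Icc a b,
        Complex.normSq (lam * φ x 0) + Complex.normSq (lam * φ x 1)
          = Complex.normSq (qwalk C φ x 0) + Complex.normSq (qwalk C φ x 1) := by
      intro x hx
      simp only [Finset.mem_Icc] at hx
      have j1 : jind a b x = 1 := by simp [jind, hx.1, hx.2]
      rw [← heig x 0, ← heig x 1, j1, one_mul, one_mul]
    rw [h2, Finset.sum_congr rfl h3, ← hSN]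
    exact Finset.sum_le_sum_of_subset_of_nonneg (Finset.Icc_subset_Icc (by omega) (by omega))
      (fun y _ _ => add_nonneg (Complex.normSq_nonneg _) (Complex.normSq_nonneg _))
  have hN0 : 0 ≤ N :=
    Finset.sum_nonneg (fun x _ => add_nonneg (Complex.normSq_nonneg _) (Complex.normSq_nonneg _))
  have hNz : N = 0 := by nlinarith
  have hall : ∀ x ∈ Finset.Icc a b, Complex.normSq (φ x 0) + Complex.normSq (φ x 1) = 0 := by
    rw [hN] at hNz
    exact (Finset.sum_eq_zero_iff_of_nonneg
      (fun x _ => add_nonneg (Complex.normSq_nonneg _) (Complex.normSq_nonneg _))).mp hNz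
  intro x i
  by_cases hx : a ≤ x ∧ x ≤ b
  · have h2 := hall x (Finset.mem_Icc.mpr hx)
    have h00 : Complex.normSq (φ x 0) = 0 := by
      nlinarith [Complex.normSq_nonneg (φ x 0), Complex.normSq_nonneg (φ x 1)]
    have h11 : Complex.normSq (φ x 1) = 0 := by
      nlinarith [Complex.normSq_nonneg (φ x 0), Complex.normSq_nonneg (φ x 1)]
    fin_cases i
    · exact Complex.normSq_eq_zero.mp h00
    · exact Complex.normSq_eq_zero.mp h11
  · exact hsupp x hx i

lemma eta_vanish (C : ℤ → Matrix (Fin 2) (Fin 2) ℂ) (a b : ℤ)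
    (hCone : ∀ x : ℤ, ¬ (a ≤ x ∧ x ≤ b) → C x = 1) (lam : ℂ) (hlam : 1 < ‖lam‖) (η : H2)
    (heq : ∀ x : ℤ, ¬ (a ≤ x ∧ x ≤ b) → ∀ i : Fin 2,
      qwalk C (fun y => ev η y) x i = lam * ev η x i) :
    (∀ x, b < x → ev η x 0 = 0) ∧ (∀ x, x < a → ev η x 1 = 0) := by
  constructor
  · have h := geom_zero (fun x => ev η x 0) lam hlam ‖η‖ (fun x => ev_bound η x 0) (b+1)
      (fun x hx => by
        have h2 := heq x (by omega) 0
        have hc := hCone (x+1) (by omega)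
        simpa [qwalk, hc, Matrix.one_mulVec] using h2)
    exact fun x hx => h x (by omega)
  · have h := geom_zero' (fun x => ev η x 1) lam hlam ‖η‖ (fun x => ev_bound η x 1) (a-1)
      (fun x hx => by
        have h2 := heq x (by omega) 1
        have hc : C (x-1) = 1 := hCone (x-1) (by omega)
        simpa [qwalk, hc, Matrix.one_mulVec] using h2)
    exact fun x hx => h x (by omega)

lemma qwalk_cutoff (C : ℤ → Matrix (Fin 2) (Fin 2) ℂ) (a b : ℤ)
    (hCone : ∀ x : ℤ, ¬ (a ≤ x ∧ x ≤ b) → C x = 1) (η : H2)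
    (hL : ∀ x, b < x → ev η x 0 = 0) (hR : ∀ x, x < a → ev η x 1 = 0) :
    ∀ x : ℤ, (a ≤ x ∧ x ≤ b) → ∀ i : Fin 2,
      qwalk C (fun y j => jind a b y * ev η y j) x i = qwalk C (fun y => ev η y) x i := by
  intro x hx i
  fin_cases i
  · show (C (x+1)).mulVec (fun j => jind a b (x+1) * ev η (x+1) j) 0
      = (C (x+1)).mulVec (ev η (x+1)) 0
    by_cases hb : x + 1 ≤ b
    · have j1 : jind a b (x+1) = 1 := by rw [jind, if_pos ⟨by omega, hb⟩]
      simp only [mulVec2, j1, one_mul]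
    · have j0 : jind a b (x+1) = 0 := by rw [jind, if_neg (by omega)]
      have hc : C (x+1) = 1 := hCone (x+1) (by omega)
      have h0 : ev η (x+1) 0 = 0 := hL (x+1) (by omega)
      simp only [mulVec2, j0, zero_mul, mul_zero, hc, h0, Matrix.one_apply]
      norm_num
  · show (C (x-1)).mulVec (fun j => jind a b (x-1) * ev η (x-1) j) 1
      = (C (x-1)).mulVec (ev η (x-1)) 1
    by_cases ha : a ≤ x - 1
    · have j1 : jind a b (x-1) = 1 := by rw [jind, if_pos ⟨ha, by omega⟩]
      simp only [mulVec2, j1, one_mul]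
    · have j0 : jind a b (x-1) = 0 := by rw [jind, if_neg (by omega)]
      have hc : C (x-1) = 1 := hCone (x-1) (by omega)
      have h1 : ev η (x-1) 1 = 0 := hR (x-1) (by omega)
      simp only [mulVec2, j0, zero_mul, mul_zero, hc, h1, Matrix.one_apply]
      norm_num

/-- The cut-off resolvent inverts the cut-off walk: for J = [a,b] ⊇ chs(C−I₂) and |λ| > 1,
(1_J U 1_J − λ)(1_J(U−λ)⁻¹1_J ψ) = 1_J ψ, and on states supported in J the cut-off
resolvent is a two-sided inverse of 1_J U 1_J − λ. -/
theorem cutoff_resolvent_inverts_cutoff_walk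
    (C : ℤ → Matrix (Fin 2) (Fin 2) ℂ) (hC : CoinAssumption C)
    (a b : ℤ) (hJC : ∀ x ∈ chsSet C, a ≤ x ∧ x ≤ b)
    (Uop : H2 →L[ℂ] H2)
    (hU : ∀ ψ : H2, ∀ x : ℤ, ∀ i : Fin 2,
      ev (Uop ψ) x i = qwalk C (fun y => ev ψ y) x i) :
    ∀ lam : ℂ, 1 < ‖lam‖ →
      -- right inverse: if ψ is supported in J and (U−λ)η = ψ, then
      -- (1_J U 1_J)(1_J η) − λ(1_J η) = ψ
      (∀ ψ η : H2,
        (∀ x : ℤ, ¬ (a ≤ x ∧ x ≤ b) → ∀ i : Fin 2, ev ψ x i = 0) →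
        (∀ x : ℤ, ∀ i : Fin 2, ev (Uop η) x i - lam * ev η x i = ev ψ x i) →
        ∀ x : ℤ, ∀ i : Fin 2,
          jind a b x * qwalk C (fun y j => jind a b y * ev η y j) x i
              - lam * (jind a b x * ev η x i)
            = ev ψ x i) ∧
      -- left inverse: if θ is supported in J and (U−λ)η = (1_J U 1_J − λ)θ,
      -- then 1_J η = θ
      (∀ θ η : H2,
        (∀ x : ℤ, ¬ (a ≤ x ∧ x ≤ b) → ∀ i : Fin 2, ev θ x i = 0) →
        (∀ x : ℤ, ∀ i : Fin 2, ev (Uop η) x i - lam * ev η x i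
          = jind a b x * qwalk C (fun y j => ev θ y j) x i - lam * ev θ x i) →
        ∀ x : ℤ, ∀ i : Fin 2, jind a b x * ev η x i = ev θ x i) := by
  have hCone : ∀ x : ℤ, ¬ (a ≤ x ∧ x ≤ b) → C x = 1 := by
    intro x hx
    by_contra h
    exact hx (hJC x ⟨x, x, h, h, le_rfl, le_rfl⟩)
  intro lam hlam
  constructor
  · -- right inverse
    intro ψ η hψ hψη
    have heq : ∀ x : ℤ, ¬ (a ≤ x ∧ x ≤ b) → ∀ i : Fin 2,
        qwalk C (fun y => ev η y) x i = lam * ev η x i := by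
      intro x hx i
      have h2 := hψη x i
      rw [hU η x i, hψ x hx i] at h2
      linear_combination h2
    obtain ⟨hL, hR⟩ := eta_vanish C a b hCone lam hlam η heq
    have key := qwalk_cutoff C a b hCone η hL hR
    intro x i
    by_cases hx : a ≤ x ∧ x ≤ b
    · have j1 : jind a b x = 1 := by rw [jind, if_pos hx]
      rw [j1, one_mul, one_mul, key x hx i, ← hU η x i]
      exact hψη x i
    · have j0 : jind a b x = 0 := by rw [jind, if_neg hx]
      rw [j0, hψ x hx i]
      ring
  · -- left inverse
    intro θ η hθ hθη
    have heq : ∀ x : ℤ, ¬ (a ≤ x ∧ x ≤ b) → ∀ i : Fin 2,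
        qwalk C (fun y => ev η y) x i = lam * ev η x i := by
      intro x hx i
      have h2 := hθη x i
      have j0 : jind a b x = 0 := by rw [jind, if_neg hx]
      rw [hU η x i, j0, hθ x hx i] at h2
      linear_combination h2
    obtain ⟨hL, hR⟩ := eta_vanish C a b hCone lam hlam η heq
    have key := qwalk_cutoff C a b hCone η hL hR
    have hφsupp : ∀ x : ℤ, ¬ (a ≤ x ∧ x ≤ b) → ∀ i : Fin 2,
        (fun x i => jind a b x * ev η x i - ev θ x i) x i = 0 := by
      intro x hx i
      have j0 : jind a b x = 0 := by rw [jind, if_neg hx]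
      simp only [j0, zero_mul, hθ x hx i, sub_zero]
    have hφeig : ∀ x : ℤ, ∀ i : Fin 2,
        jind a b x * qwalk C (fun x i => jind a b x * ev η x i - ev θ x i) x i
          = lam * (fun x i => jind a b x * ev η x i - ev θ x i) x i := by
      intro x i
      by_cases hx : a ≤ x ∧ x ≤ b
      · have j1 : jind a b x = 1 := by rw [jind, if_pos hx]
        have hsplit : qwalk C (fun x i => jind a b x * ev η x i - ev θ x i) x i
            = qwalk C (fun y j => jind a b y * ev η y j) x i
              - qwalk C (fun y j => ev θ y j) x i := by
          fin_cases i
          · show (C (x+1)).mulVec (fun j => jind a b (x+1) * ev η (x+1) j - ev θ (x+1) j) 0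
              = (C (x+1)).mulVec (fun j => jind a b (x+1) * ev η (x+1) j) 0
                - (C (x+1)).mulVec (fun j => ev θ (x+1) j) 0
            simp only [mulVec2]; ring
          · show (C (x-1)).mulVec (fun j => jind a b (x-1) * ev η (x-1) j - ev θ (x-1) j) 1
              = (C (x-1)).mulVec (fun j => jind a b (x-1) * ev η (x-1) j) 1
                - (C (x-1)).mulVec (fun j => ev θ (x-1) j) 1
            simp only [mulVec2]; ring
        have h2 := hθη x i
        rw [hU η x i, j1, one_mul] at h2
        simp only [j1, one_mul]
        rw [hsplit, key x hx i]
        linear_combination h2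
      · have j0 : jind a b x = 0 := by rw [jind, if_neg hx]
        simp only [j0, zero_mul, hθ x hx i, sub_zero, mul_zero]
    have hz := eig_zero C hC.unitary a b lam hlam
      (fun x i => jind a b x * ev η x i - ev θ x i) hφsupp hφeig
    intro x i
    have h3 := hz x i
    linear_combination h3
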